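/- Let R be a commutative ring, e ∈ R, and (G_m)_{m≥0} a sequence in R with generating series G(u) = ∑_{m≥0} G_m u^{-m} ∈ R[[u^{-1}]]. Define φ(G)_m = G_m − (∑_{l=1}^{m-1} (-2)^l G_{m-l-1})·e − (∑_{l=0}^{m-2} (-2)^l G_{m-l-2})·e². Then the generating series of (φ(G)_m) equals G(u)·(1 + e·u^{-1})·(1 − e·(u+2)^{-1}), where (u+2)^{-1} = ∑_{k≥0} (-2)^k u^{-(k+1)} in R[[u^{-1}]]. -/

import Mathlib

open Finset PowerSeries

/-- Generating-function form of the partial-evaluation map on the generators `G^{(m)}`: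
if `φ(G)_m = G_m − (∑_{l=1}^{m-1} (-2)^l G_{m-l-1})·e − (∑_{l=0}^{m-2} (-2)^l G_{m-l-2})·e²`,
then `∑_m φ(G)_m u^{-m} = G(u)·(1 + e·u⁻¹)·(1 − e·(u+2)⁻¹)` in `R[[u⁻¹]]`, where
`(u+2)⁻¹ = ∑_{k≥0} (-2)^k u^{-(k+1)}`. -/
theorem partial_evaluation_G_generating_function {R : Type*} [CommRing R] (e : R)
    (G φG : ℕ → R)
    (hφ : ∀ m : ℕ, φG m =
      G m - (∑ l ∈ Finset.Icc 1 (m - 1), (-2 : R) ^ l * G (m - l - 1)) * e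
          - (∑ l ∈ Finset.range (m - 1), (-2 : R) ^ l * G (m - l - 2)) * e ^ 2) :
    PowerSeries.mk φG =
      PowerSeries.mk G * (1 + PowerSeries.C e * PowerSeries.X) *
        (1 - PowerSeries.C e *
          PowerSeries.mk fun p => if p = 0 then 0 else (-2 : R) ^ (p - 1)) := by
  set f : ℕ → R := fun p => if p = 0 then 0 else (-2 : R) ^ (p - 1) with hf
  set g : ℕ → R := fun p => if p = 0 then 1 else if p = 1 then 0
      else (-2 : R) ^ (p - 2) * (2 * e - e ^ 2) with hg
  have key : (1 + PowerSeries.C e * PowerSeries.X) *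
      (1 - PowerSeries.C e * PowerSeries.mk f) = PowerSeries.mk g := by
    have hXf : PowerSeries.X * PowerSeries.mk f
        = PowerSeries.mk (fun p => if p = 0 then 0 else f (p - 1)) := by
      ext p
      cases p with
      | zero => simp
      | succ n => simp [coeff_succ_X_mul]
    have expand : (1 + PowerSeries.C e * PowerSeries.X) *
        (1 - PowerSeries.C e * PowerSeries.mk f)
        = 1 + PowerSeries.C e * PowerSeries.X - PowerSeries.C e * PowerSeries.mk f
          - PowerSeries.C e * (PowerSeries.C e * (PowerSeries.X * PowerSeries.mk f)) := by
      ring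
    rw [expand, hXf]
    ext p
    match p with
    | 0 => simp [hf, hg]
    | 1 => simp [hf, hg, coeff_X, coeff_C_mul]
    | (n+2) => simp [hf, hg, coeff_X, coeff_one, coeff_C_mul]; ring
  rw [mul_assoc, key]
  ext n
  rw [coeff_mk, coeff_mul, Finset.Nat.sum_antidiagonal_eq_sum_range_succ_mk, hφ]
  simp only [coeff_mk]
  match n with
  | 0 => simp [hg]
  | 1 => simp [hg, Finset.sum_range_succ]
  | (n+2) =>
    rw [Finset.sum_range_succ, Finset.sum_range_succ]
    have h1 : g (n + 2 - (n + 1)) = 0 := by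
      have : n + 2 - (n + 1) = 1 := by omega
      rw [this]; simp [hg]
    have h2 : g (n + 2 - (n + 2)) = 1 := by norm_num [hg]
    rw [h1, h2]
    have h3 : ∀ i ∈ Finset.range (n + 1), G i * g (n + 2 - i)
        = G i * ((-2 : R) ^ (n - i) * (2 * e - e ^ 2)) := by
      intro i hi
      simp only [Finset.mem_range] at hi
      have h0 : n + 2 - i ≠ 0 := by omega
      have h' : n + 2 - i ≠ 1 := by omega
      have h'' : n + 2 - i - 2 = n - i := by omega
      simp [hg, h0, h', h'']
    rw [Finset.sum_congr rfl h3,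
      ← Finset.sum_range_reflect (fun i => G i * ((-2 : R) ^ (n - i) * (2 * e - e ^ 2))) (n + 1)]
    have h4 : ∀ j ∈ Finset.range (n + 1),
        G (n + 1 - 1 - j) * ((-2 : R) ^ (n - (n + 1 - 1 - j)) * (2 * e - e ^ 2))
        = G (n - j) * ((-2 : R) ^ j * (2 * e - e ^ 2)) := by
      intro j hj
      simp only [Finset.mem_range] at hj
      have e1 : n + 1 - 1 - j = n - j := by omega
      have e2 : n - (n - j) = j := by omega
      rw [e1, e2]
    rw [Finset.sum_congr rfl h4]
    have hicc : ∑ l ∈ Finset.Icc 1 (n + 2 - 1), (-2 : R) ^ l * G (n + 2 - l - 1)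
        = ∑ k ∈ Finset.range (n + 1), (-2 : R) ^ (k + 1) * G (n - k) := by
      rw [show n + 2 - 1 = n + 1 from rfl, ← Finset.Ico_add_one_right_eq_Icc, Finset.sum_Ico_eq_sum_range]
      apply Finset.sum_congr (by norm_num)
      intro k hk
      simp only [Finset.mem_range] at hk
      have e1 : n + 2 - (k + 1) - 1 = n - k := by omega
      rw [add_comm 1 k, e1]
    have hrange : ∑ l ∈ Finset.range (n + 2 - 1), (-2 : R) ^ l * G (n + 2 - l - 2)
        = ∑ k ∈ Finset.range (n + 1), (-2 : R) ^ k * G (n - k) := by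
      apply Finset.sum_congr (by norm_num)
      intro k hk
      simp only [Finset.mem_range] at hk
      have e1 : n + 2 - k - 2 = n - k := by omega
      rw [e1]
    have hs : (∑ k ∈ Finset.range (n + 1), (-2 : R) ^ (k + 1) * G (n - k)) * e
        + (∑ k ∈ Finset.range (n + 1), (-2 : R) ^ k * G (n - k)) * e ^ 2
        = -∑ j ∈ Finset.range (n + 1), G (n - j) * ((-2 : R) ^ j * (2 * e - e ^ 2)) := by
      rw [Finset.sum_mul, Finset.sum_mul, ← Finset.sum_add_distrib, ← Finset.sum_neg_distrib]
      exact Finset.sum_congr rfl fun k _ => by ring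
    rw [hicc, hrange, sub_sub, hs]
    ring
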